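/- arXiv:2109.10714 — 2 statements merged into one kernel-verified Lean document; each statement's English description precedes it below -/
import Mathlib

section
/- Let a2, a5, b2, b3, b5 be positive real numbers with a2 > 2 b2 and b3^2 ≠ b2 * b5. Suppose complex numbers x, y, z with x, y, z ≠ 0 satisfy: (i) a2 + a5 x - b2 (y + 1/y) - b3 x (z + 1/z + z/y + y/z) - b5 x^2 = 0, (ii) a5 - b3 (z + 1/z + z/y + y/z) - 2 b5 x = 0, (iii) b2 (1 - 1/y^2) + b3 x (1/z - z/y^2) = 0, (iv) b3 x (1 - 1/z^2 + 1/y - y/z^2) = 0, and additionally y ≠ 1 and y ≠ -1. Then y = z^2, b2 (z + 1/z) + b3 x = 0, x = - a5 b2 / (2 (b3^2 - b2 b5)), and the consistency condition 4 (b3^2 - b2 b5)(a2 + 2 b2) = a5^2 * b2 holds. -/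
theorem stmt_5 (a2 a5 b2 b3 b5 : ℝ)
    (ha2 : 0 < a2) (ha5 : 0 < a5) (hb2 : 0 < b2) (hb3 : 0 < b3) (hb5 : 0 < b5)
    (hBig : a2 > 2 * b2) (hdisc : b3 ^ 2 ≠ b2 * b5)
    (x y z : ℂ) (hx : x ≠ 0) (hy : y ≠ 0) (hz : z ≠ 0)
    (h1 : (a2 : ℂ) + a5 * x - b2 * (y + 1 / y)
        - b3 * x * (z + 1 / z + z / y + y / z) - b5 * x ^ 2 = 0)
    (h2 : (a5 : ℂ) - b3 * (z + 1 / z + z / y + y / z) - 2 * b5 * x = 0)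
    (h3 : (b2 : ℂ) * (1 - 1 / y ^ 2) + b3 * x * (1 / z - z / y ^ 2) = 0)
    (h4 : (b3 : ℂ) * x * (1 - 1 / z ^ 2 + 1 / y - y / z ^ 2) = 0)
    (hy1 : y ≠ 1) (hy2 : y ≠ -1) :
    y = z ^ 2 ∧ (b2 : ℂ) * (z + 1 / z) + b3 * x = 0 ∧
      x = -(a5 * b2 : ℂ) / (2 * ((b3 : ℂ) ^ 2 - b2 * b5)) ∧
      4 * (b3 ^ 2 - b2 * b5) * (a2 + 2 * b2) = a5 ^ 2 * b2 := by
  have hb2c : (b2 : ℂ) ≠ 0 := by exact_mod_cast hb2.ne'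
  have hb3c : (b3 : ℂ) ≠ 0 := by exact_mod_cast hb3.ne'
  have hD : (b3 : ℂ) ^ 2 - (b2 : ℂ) * (b5 : ℂ) ≠ 0 := by
    intro h
    apply hdisc
    have h' : ((b3 ^ 2 : ℝ) : ℂ) = ((b2 * b5 : ℝ) : ℂ) := by push_cast; linear_combination h
    exact_mod_cast h'
  -- Step 1: y = z^2
  have h4' : (1 : ℂ) - 1 / z ^ 2 + 1 / y - y / z ^ 2 = 0 := by
    rcases mul_eq_zero.mp h4 with h | h
    · exact absurd h (mul_ne_zero hb3c hx)
    · exact h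
  have hyz : y = z ^ 2 := by
    have e : (y + 1) * (z ^ 2 - y) = y * z ^ 2 * ((1 : ℂ) - 1 / z ^ 2 + 1 / y - y / z ^ 2) := by
      field_simp
      ring
    rw [h4', mul_zero] at e
    rcases mul_eq_zero.mp e with h | h
    · exact absurd (by linear_combination h : y = -1) hy2
    · linear_combination -h
  subst hyz
  have hz21 : z ^ 2 - 1 ≠ 0 := sub_ne_zero.mpr hy1
  have hz2 : (z : ℂ) ^ 2 ≠ 0 := pow_ne_zero _ hz
  -- Step 2: the key relation from h3
  have eK : ((b2 : ℂ) * (z ^ 2 + 1) + b3 * x * z) * (z ^ 2 - 1)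
      = z ^ 4 * ((b2 : ℂ) * (1 - 1 / (z ^ 2) ^ 2) + b3 * x * (1 / z - z / (z ^ 2) ^ 2)) := by
    field_simp
    ring
  rw [h3, mul_zero] at eK
  have K : (b2 : ℂ) * (z ^ 2 + 1) + b3 * x * z = 0 :=
    (mul_eq_zero.mp eK).resolve_right hz21
  have key2 : (b2 : ℂ) * (z + 1 / z) + b3 * x = 0 := by
    field_simp
    linear_combination K
  -- Step 3: cleared versions of h2 and h1
  have H2 : (a5 : ℂ) * z - 2 * b3 * (z ^ 2 + 1) - 2 * b5 * x * z = 0 := by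
    have e : (a5 : ℂ) * z - 2 * b3 * (z ^ 2 + 1) - 2 * b5 * x * z
        = z * ((a5 : ℂ) - b3 * (z + 1 / z + z / z ^ 2 + z ^ 2 / z) - 2 * b5 * x) := by
      field_simp
      ring
    rw [e, h2, mul_zero]
  have H1 : (a2 : ℂ) * z ^ 2 + a5 * x * z ^ 2 - b2 * (z ^ 4 + 1)
      - 2 * b3 * x * (z ^ 3 + z) - b5 * x ^ 2 * z ^ 2 = 0 := by
    have e : (a2 : ℂ) * z ^ 2 + a5 * x * z ^ 2 - b2 * (z ^ 4 + 1)
        - 2 * b3 * x * (z ^ 3 + z) - b5 * x ^ 2 * z ^ 2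
        = z ^ 2 * ((a2 : ℂ) + a5 * x - b2 * (z ^ 2 + 1 / z ^ 2)
          - b3 * x * (z + 1 / z + z / z ^ 2 + z ^ 2 / z) - b5 * x ^ 2) := by
      field_simp
      ring
    rw [e, h1, mul_zero]
  -- Step 4: value of x
  have hx2 : (a5 : ℂ) * b2 + 2 * ((b3 : ℂ) ^ 2 - b2 * b5) * x = 0 := by
    have e : ((a5 : ℂ) * b2 + 2 * ((b3 : ℂ) ^ 2 - b2 * b5) * x) * z = 0 := by
      linear_combination (b2 : ℂ) * H2 + 2 * (b3 : ℂ) * K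
    exact (mul_eq_zero.mp e).resolve_right hz
  have hxval : x = -(a5 * b2 : ℂ) / (2 * ((b3 : ℂ) ^ 2 - b2 * b5)) := by
    field_simp
    linear_combination hx2
  -- Step 5: consistency condition
  have F : (b2 : ℂ) * (a2 + 2 * b2) + a5 * b2 * x + ((b3 : ℂ) ^ 2 - b2 * b5) * x ^ 2 = 0 := by
    have e : ((b2 : ℂ) * (a2 + 2 * b2) + a5 * b2 * x + ((b3 : ℂ) ^ 2 - b2 * b5) * x ^ 2) * z ^ 2
        = 0 := by
      linear_combination (b2 : ℂ) * H1 + ((b2 : ℂ) * (z ^ 2 + 1) + b3 * x * z) * K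
    exact (mul_eq_zero.mp e).resolve_right hz2
  have Ec : (4 : ℂ) * ((b3 : ℂ) ^ 2 - b2 * b5) * ((a2 : ℂ) + 2 * b2) = (a5 : ℂ) ^ 2 * b2 := by
    have e : (b2 : ℂ) * ((4 : ℂ) * ((b3 : ℂ) ^ 2 - b2 * b5) * ((a2 : ℂ) + 2 * b2)
        - (a5 : ℂ) ^ 2 * b2) = 0 := by
      linear_combination 4 * ((b3 : ℂ) ^ 2 - b2 * b5) * F
        - (2 * ((b3 : ℂ) ^ 2 - b2 * b5) * x + a5 * b2) * hx2
    have := (mul_eq_zero.mp e).resolve_left hb2c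
    linear_combination this
  refine ⟨rfl, key2, hxval, ?_⟩
  exact_mod_cast Ec
end

section
/- Let b1, b2, b3, b4, b5 be positive real numbers such that b3^2 * b4 / (2 b5) * (b4/b5 - 1) is a real number r and -b2 * b4 / (b1 * b5) < 0. Then there exist no complex numbers x, y, z with x, y, z ≠ 0 satisfying simultaneously: (i) b1 + b2 x + b3 y (1+z) + b4 z + b5 y^2 z / x = 0, (ii) b2 - b5 y^2 z / x^2 = 0, (iii) b3 (1+z) + 2 b5 y z / x = 0, (iv) b3 y + b4 + b5 y^2 / x = 0. -/
theorem stmt_6 (b1 b2 b3 b4 b5 : ℝ)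
    (hb1 : 0 < b1) (hb2 : 0 < b2) (hb3 : 0 < b3) (hb4 : 0 < b4) (hb5 : 0 < b5)
    (hr : ∃ r : ℝ, b3 ^ 2 * b4 / (2 * b5) * (b4 / b5 - 1) = r)
    (hneg : -b2 * b4 / (b1 * b5) < 0) :
    ¬ ∃ x y z : ℂ, x ≠ 0 ∧ y ≠ 0 ∧ z ≠ 0 ∧
      (b1 : ℂ) + b2 * x + b3 * y * (1 + z) + b4 * z + b5 * y ^ 2 * z / x = 0 ∧
      (b2 : ℂ) - b5 * y ^ 2 * z / x ^ 2 = 0 ∧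
      (b3 : ℂ) * (1 + z) + 2 * b5 * y * z / x = 0 ∧
      (b3 : ℂ) * y + b4 + b5 * y ^ 2 / x = 0 := by
  rintro ⟨x, y, z, hx, hy, hz, e1, e2, e3, e4⟩
  have hb1' : (b1:ℂ) ≠ 0 := by exact_mod_cast hb1.ne'
  have hb3' : (b3:ℂ) ≠ 0 := by exact_mod_cast hb3.ne'
  have hb4' : (b4:ℂ) ≠ 0 := by exact_mod_cast hb4.ne'
  have hb5' : (b5:ℂ) ≠ 0 := by exact_mod_cast hb5.ne'
  -- clear denominators
  have E1 : (b1:ℂ)*x + b2*x^2 + b3*y*(1+z)*x + b4*z*x + b5*y^2*z = 0 := by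
    have := e1; field_simp at this; linear_combination this
  have E2 : (b2:ℂ)*x^2 - b5*y^2*z = 0 := by
    have := e2; field_simp at this; linear_combination this
  have E3 : (b3:ℂ)*(1+z)*x + 2*b5*y*z = 0 := by
    have := e3; field_simp at this; linear_combination this
  have E4 : ((b3:ℂ)*y + b4)*x + b5*y^2 = 0 := by
    have := e4; field_simp at this; linear_combination this
  -- z = -b1/b4
  have hzval : (b4:ℂ)*z = -b1 := by
    have h : x*((b1:ℂ) + b4*z) = 0 := by linear_combination E1 - E2 - y*E3
    rcases mul_eq_zero.1 h with h | h
    · exact absurd h hx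
    · linear_combination h
  -- b3*y*(1-z) = 2*b4*z
  have hyval : (b3:ℂ)*y*(1-z) = 2*b4*z := by
    have h : x*((b3:ℂ)*y*(1-z) - 2*b4*z) = 0 := by linear_combination y*E3 - 2*z*E4
    rcases mul_eq_zero.1 h with h | h
    · exact absurd h hx
    · linear_combination h
  -- key equation
  have key : (b2:ℂ)*b5*y^2 = z*(b3*y+b4)^2 := by
    have h : (b5*y^2)*((b2:ℂ)*b5*y^2 - z*(b3*y+b4)^2) = 0 := by
      linear_combination (b2*(b5*y^2 - (b3*y+b4)*x))*E4 + (b3*y+b4)^2*E2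
    rcases mul_eq_zero.1 h with h | h
    · rcases mul_eq_zero.1 h with h | h
      · exact absurd h hb5'
      · exact absurd (pow_eq_zero_iff (by norm_num)|>.1 h) hy
    · linear_combination h
  -- explicit real values
  set Z : ℝ := -b1/b4 with hZ
  set Y : ℝ := -2*b1*b4/(b3*(b1+b4)) with hY
  have hb14 : b1 + b4 ≠ 0 := by positivity
  have hzZ : z = (Z:ℂ) := by
    rw [hZ]; push_cast; field_simp; linear_combination hzval
  have hyY : y = (Y:ℂ) := by
    rw [hY]; push_cast
    have h14 : (b1:ℂ) + b4 ≠ 0 := by exact_mod_cast hb14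
    field_simp
    -- b3*y*(1-z) = 2*b4*z with b4*z = -b1 : b3*y*(b4 - b4*z) = 2*b4^2*z = -2*b1*b4
    linear_combination b4*hyval + (2*b4 + b3*y)*hzval
  rw [hzZ, hyY] at key
  have keyR : b2*b5*Y^2 = Z*(b3*Y+b4)^2 := by exact_mod_cast key
  have hYneg : Y < 0 := by
    rw [hY]; apply div_neg_of_neg_of_pos <;> nlinarith
  have hZneg : Z < 0 := by
    rw [hZ]; apply div_neg_of_neg_of_pos <;> nlinarith
  nlinarith [sq_nonneg (b3*Y+b4), mul_pos hb2 hb5, sq_nonneg Y, mul_pos (mul_pos hb2 hb5) (mul_pos (neg_pos.2 hYneg) (neg_pos.2 hYneg))]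
end
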